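/- Let ≤ be a tree order on a finite set V, let G be its comparability graph, and let c be any coloring of V. If v < x and c(v) = c(x), then the deficiency of v under c is at most the deficiency of x under c. -/

import Mathlib

/-- The deficiency of a vertex `v` under a coloring `c`: the number of neighbors
of `v` whose color equals `c v`. -/
noncomputable def deficiency {V α : Type*} (G : SimpleGraph V) (c : V → α) (v : V) : ℕ :=
  {w | G.Adj v w ∧ c w = c v}.ncard

/-- `c` is a `(C,D)`-coloring (with colors `Fin C`): every vertex has at most `D`
neighbors of its own color. -/
def IsDefColoring {V α : Type*} (G : SimpleGraph V) (D : ℕ) (c : V → α) : Prop :=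
  ∀ v, deficiency G c v ≤ D

/-- A partial order is a tree order if every up-set `{w | v ≤ w}` is a chain. -/
def IsTreeOrder (V : Type*) [PartialOrder V] : Prop :=
  ∀ v : V, IsChain (· ≤ ·) {w | v ≤ w}

/-- The comparability graph of a partial order: `u` and `v` are adjacent iff they are
distinct and comparable. -/
def compGraph (V : Type*) [PartialOrder V] : SimpleGraph V where
  Adj u v := u ≠ v ∧ (u ≤ v ∨ v ≤ u)
  symm := by
    constructor
    intro u v h
    exact ⟨h.1.symm, h.2.symm⟩
  loopless := by
    constructor
    intro v h
    exact h.1 rfl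
/-- In the comparability graph of a tree order, if `v < x` and `c v = c x` then the
deficiency of `v` under `c` is at most the deficiency of `x` under `c`. -/
theorem stmt4 {V : Type*} [Fintype V] [PartialOrder V] (htree : IsTreeOrder V)
    {α : Type*} (c : V → α) (v x : V) (hvx : v < x) (hcol : c v = c x) :
    deficiency (compGraph V) c v ≤ deficiency (compGraph V) c x := by
  classical
  set S := {w | (compGraph V).Adj v w ∧ c w = c v} with hS
  set T := {w | (compGraph V).Adj x w ∧ c w = c x} with hT
  have hvne : v ≠ x := ne_of_lt hvx
  let f : V → V := fun w => if w = x then v else w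
  have himg : f '' S ⊆ T := by
    rintro _ ⟨w, hw, rfl⟩
    obtain ⟨⟨hne, hcomp⟩, hcw⟩ := hw
    by_cases hwx : w = x
    · simp only [f, hwx, if_pos rfl]
      exact ⟨⟨hvne.symm, Or.inr hvx.le⟩, hcol⟩
    · simp only [f, if_neg hwx]
      refine ⟨⟨fun h => hwx h.symm, ?_⟩, hcw.trans hcol⟩
      rcases hcomp with h | h
      · -- v ≤ w, so w and x are in the upset of v
        have := htree v (Set.mem_setOf.mpr h) (Set.mem_setOf.mpr hvx.le) hwx
        rcases this with h' | h'
        · exact Or.inr h'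
        · exact Or.inl h'
      · exact Or.inr (h.trans hvx.le)
  have hinj : Set.InjOn f S := by
    intro a ha b hb hab
    by_cases hax : a = x <;> by_cases hbx : b = x
    · rw [hax, hbx]
    · simp only [f, if_pos hax, if_neg hbx] at hab
      exact absurd hab.symm hb.1.1.symm
    · simp only [f, if_neg hax, if_pos hbx] at hab
      exact absurd hab ha.1.1.symm
    · simpa only [f, if_neg hax, if_neg hbx] using hab
  calc S.ncard = (f '' S).ncard := (Set.ncard_image_of_injOn hinj).symm
    _ ≤ T.ncard := Set.ncard_le_ncard himg (Set.toFinite T)
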